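/- Let r > 0, L ≥ 0, ω > 0, τ > 0 be real numbers with L ≤ r·τ, and set φ = −arctan(1/(ωτ)). Then Re( e^{iφ} / (r + iωL) ) ≥ 0, i.e., the resistive-inductive element remains augmented-dissipative under the rotation by the maximal negative augmentation angle −arctan((ωτ)⁻¹). -/

import Mathlib

/-- A resistive-inductive element with time constant `L/r ≤ τ` remains
augmented-dissipative under the maximal negative augmentation angle
`φ = −arctan((ωτ)⁻¹)`: its Augmented Conductance is nonnegative. -/
theorem stmt_11 (r L ω τ : ℝ) (hr : 0 < r) (hL : 0 ≤ L) (hω : 0 < ω) (hτ : 0 < τ)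
    (hLrτ : L ≤ r * τ) :
    0 ≤ (Complex.exp ((-Real.arctan (1 / (ω * τ)) : ℝ) * Complex.I) /
        ((r : ℂ) + (ω : ℂ) * (L : ℂ) * Complex.I)).re := by
  set x : ℝ := -Real.arctan (1 / (ω * τ)) with hx
  rw [Complex.div_re, Complex.exp_ofReal_mul_I_re, Complex.exp_ofReal_mul_I_im]
  simp only [hx, Real.cos_neg, Real.sin_neg, Real.cos_arctan, Real.sin_arctan,
    Complex.add_re, Complex.add_im, Complex.ofReal_re, Complex.ofReal_im,
    Complex.mul_re, Complex.mul_im, Complex.I_re, Complex.I_im, Complex.normSq_apply,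
    mul_zero, zero_mul, sub_zero, zero_add, mul_one, zero_sub, add_zero, neg_zero]
  have hs : (0:ℝ) < Real.sqrt (1 + (1/(ω*τ))^2) := Real.sqrt_pos.2 (by positivity)
  have hsi : (0:ℝ) ≤ (Real.sqrt (1 + (1/(ω*τ))^2))⁻¹ := by positivity
  have hd : (0:ℝ) ≤ r*r + (ω*L)*(ω*L) := by positivity
  have key : ω * L * (1/(ω*τ)) ≤ r := by
    rw [mul_one_div, div_le_iff₀ (by positivity : (0:ℝ) < ω*τ)]
    nlinarith
  rw [← add_div]
  apply div_nonneg _ (by nlinarith)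
  have := mul_nonneg hsi (sub_nonneg.2 key)
  ring_nf
  ring_nf at this
  nlinarith [this]
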